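/- arXiv:1605.01039 — 3 statements merged into one kernel-verified Lean document; each statement's English description precedes it below -/
import Mathlib

section
/- Let Ψ = Ψ_v be the square root embedding of a positively edge-weighted tree T into ℝ^{m-1}. For nodes v_1, v_2, v_3, v_4 of T such that the common subpath P = P_{v_1,v_2} ∩ P_{v_3,v_4} is traversed in the same direction by both oriented paths, the dot product (Ψ(v_2) - Ψ(v_1)) · (Ψ(v_4) - Ψ(v_3)) equals Σ_{e ∈ P} w(e). -/
open SimpleGraph

/-- The unique path between two vertices of a tree, as a walk. -/
noncomputable def treePath {V : Type*} (G : SimpleGraph V) (hG : G.IsTree) (a b : V) :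
    G.Walk a b :=
  (hG.existsUnique_path a b).choose

/-- The square root embedding with base node `v`: the coordinate of `Ψ_v u` at edge `e`
is `√(w e)` if `e` lies on the path from `v` to `u`, and `0` otherwise. -/
noncomputable def sqrtEmbed {V : Type*} [DecidableEq V] (G : SimpleGraph V) (hG : G.IsTree)
    [Fintype G.edgeSet] (w : Sym2 V → ℝ) (v u : V) : EuclideanSpace ℝ G.edgeSet :=
  WithLp.toLp 2 (fun e => if (e : Sym2 V) ∈ (treePath G hG v u).edges then Real.sqrt (w e) else 0)

/-- The tree metric: sum of the weights of the edges on the unique path. -/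
noncomputable def treeDist {V : Type*} (G : SimpleGraph V) (hG : G.IsTree)
    (w : Sym2 V → ℝ) (a b : V) : ℝ :=
  ((treePath G hG a b).edges.map w).sum

section Aux

variable {V : Type*} {G : SimpleGraph V}

lemma dart_reachable' {x y : V} (p : G.Walk x y) (hp : p.edges.Nodup) :
    ∀ d ∈ p.darts, (G.deleteEdges {d.edge}).Reachable x d.fst ∧
      (G.deleteEdges {d.edge}).Reachable d.snd y := by
  induction p with
  | nil => simp
  | cons h q ih =>
    rename_i u u' u''
    intro d hd
    rw [Walk.darts_cons, List.mem_cons] at hd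
    rw [Walk.edges_cons, List.nodup_cons] at hp
    rcases hd with rfl | hd
    · refine ⟨Reachable.refl _, ?_⟩
      refine ⟨q.toDeleteEdges {Dart.edge ⟨(u, u'), h⟩} fun f hf => ?_⟩
      simp only [Set.mem_singleton_iff]
      rintro rfl
      exact hp.1 hf
    · obtain ⟨h1, h2⟩ := ih hp.2 d hd
      refine ⟨Reachable.trans ⟨Walk.cons ?_ Walk.nil⟩ h1, h2⟩
      rw [deleteEdges_adj]
      refine ⟨h, ?_⟩
      simp only [Set.mem_singleton_iff, Dart.edge_mk]
      intro hcontra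
      exact hp.1 (hcontra ▸ List.mem_map_of_mem (f := Dart.edge) hd)

lemma treePath_isPath' (hG : G.IsTree) (a b : V) : (treePath G hG a b).IsPath :=
  (hG.existsUnique_path a b).choose_spec.1

lemma treePath_unique' (hG : G.IsTree) {a b : V} (p : G.Walk a b) (hp : p.IsPath) :
    p = treePath G hG a b :=
  (hG.existsUnique_path a b).choose_spec.2 p hp

lemma mem_treePath_iff' [DecidableEq V] (hG : G.IsTree) (a b : V) (e : Sym2 V) :
    e ∈ (treePath G hG a b).edges ↔ ¬ (G.deleteEdges {e}).Reachable a b := by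
  constructor
  · intro hmem ⟨q⟩
    have hq := q.toPath.2
    set r := (q.toPath : (G.deleteEdges {e}).Walk a b) with hr
    have hsub : ∀ f ∈ r.edges, f ∈ G.edgeSet := by
      intro f hf
      have := r.edges_subset_edgeSet hf
      rw [edgeSet_deleteEdges] at this
      exact this.1
    have hnot : e ∉ r.edges := by
      intro hf
      have := r.edges_subset_edgeSet hf
      rw [edgeSet_deleteEdges] at this
      exact this.2 rfl
    have := treePath_unique' hG (r.transfer G hsub) (hq.transfer hsub)
    rw [← this] at hmem
    rw [Walk.edges_transfer] at hmem
    exact hnot hmem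
  · intro hws
    by_contra hmem
    exact hws ⟨(treePath G hG a b).toDeleteEdges {e} fun f hf hfe => hmem (hfe ▸ hf)⟩

lemma not_reach_dart_ends' [DecidableEq V] (hG : G.IsTree) (d : G.Dart) :
    ¬ (G.deleteEdges {d.edge}).Reachable d.fst d.snd := by
  rw [← mem_treePath_iff' hG]
  have hp : (Walk.cons d.adj Walk.nil : G.Walk d.fst d.snd).IsPath := by
    simp [Walk.cons_isPath_iff, d.adj.ne]
  rw [← treePath_unique' hG _ hp]
  simp [Dart.edge]

lemma reach_dichotomy' [DecidableEq V] (hG : G.IsTree) (d : G.Dart) (v : V) :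
    (G.deleteEdges {d.edge}).Reachable v d.fst ∨ (G.deleteEdges {d.edge}).Reachable v d.snd := by
  by_cases h : d.edge ∈ (treePath G hG v d.fst).edges
  · obtain ⟨d', hd', hde⟩ := List.mem_map.1 h
    have h1 := (dart_reachable' _ (treePath_isPath' hG v d.fst).edges_nodup d' hd').1
    have : d'.toProd = d.toProd ∨ d'.toProd = d.toProd.swap := by
      have := hde
      rw [Dart.edge, Dart.edge, Sym2.mk_eq_mk_iff] at this
      simpa [Prod.ext_iff] using this
    rcases this with h2 | h2
    · left; rw [hde] at h1
      have hh : d'.fst = d.fst := congrArg Prod.fst h2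
      exact hh ▸ h1
    · right; rw [hde] at h1
      have hh : d'.fst = d.snd := congrArg Prod.fst h2
      exact hh ▸ h1
  · left
    rw [mem_treePath_iff' hG] at h
    exact not_not.1 h

lemma key_side' [DecidableEq V] (hG : G.IsTree) {v₁ v₂ : V} {d : G.Dart}
    (hd : d ∈ (treePath G hG v₁ v₂).darts) (v : V) :
    (d.edge ∈ (treePath G hG v v₁).edges ↔ ¬ (G.deleteEdges {d.edge}).Reachable v d.fst) ∧
    (d.edge ∈ (treePath G hG v v₂).edges ↔ (G.deleteEdges {d.edge}).Reachable v d.fst) := by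
  obtain ⟨h1, h2⟩ := dart_reachable' _ (treePath_isPath' hG v₁ v₂).edges_nodup d hd
  have hns := not_reach_dart_ends' hG d
  have hdich := reach_dichotomy' hG d v
  have e1 : (G.deleteEdges {d.edge}).Reachable v v₁ ↔
      (G.deleteEdges {d.edge}).Reachable v d.fst :=
    ⟨fun h => h.trans h1, fun h => h.trans h1.symm⟩
  have e2 : (G.deleteEdges {d.edge}).Reachable v v₂ ↔
      (G.deleteEdges {d.edge}).Reachable v d.snd :=
    ⟨fun h => h.trans h2.symm, fun h => h.trans h2⟩
  have e3 : ¬ (G.deleteEdges {d.edge}).Reachable v d.snd ↔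
      (G.deleteEdges {d.edge}).Reachable v d.fst := by
    constructor
    · intro h; exact hdich.resolve_right h
    · intro h hc; exact hns (h.symm.trans hc)
  rw [mem_treePath_iff' hG, mem_treePath_iff' hG, e1, e2, e3]
  exact ⟨Iff.rfl, Iff.rfl⟩

end Aux

open RealInnerProductSpace in
/-- if the common subpath of `P_{v₁,v₂}` and `P_{v₃,v₄}` is traversed in the
same direction by both (every shared edge is traversed as the same dart), the dot product
`(Ψ v₂ - Ψ v₁) ⬝ (Ψ v₄ - Ψ v₃)` is the total weight of the shared edges. -/
theorem sqrtEmbed_inner_same_dir {V : Type*} [DecidableEq V] (G : SimpleGraph V)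
    (hG : G.IsTree) [Fintype G.edgeSet] (w : Sym2 V → ℝ) (hw : ∀ e ∈ G.edgeSet, 0 < w e)
    (v v₁ v₂ v₃ v₄ : V)
    (hsame : ∀ d₁ ∈ (treePath G hG v₁ v₂).darts, ∀ d₂ ∈ (treePath G hG v₃ v₄).darts,
      d₁.edge = d₂.edge → d₁.toProd = d₂.toProd) :
    ⟪sqrtEmbed G hG w v v₂ - sqrtEmbed G hG w v v₁,
      sqrtEmbed G hG w v v₄ - sqrtEmbed G hG w v v₃⟫ =
    ∑ e : G.edgeSet, if (e : Sym2 V) ∈ (treePath G hG v₁ v₂).edges ∧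
        (e : Sym2 V) ∈ (treePath G hG v₃ v₄).edges then w e else 0 := by
  simp only [PiLp.inner_apply, RCLike.inner_apply, conj_trivial, PiLp.sub_apply, sqrtEmbed]
  refine Finset.sum_congr rfl fun e _ => ?_
  by_cases h12 : (e : Sym2 V) ∈ (treePath G hG v₁ v₂).edges
  · by_cases h34 : (e : Sym2 V) ∈ (treePath G hG v₃ v₄).edges
    · obtain ⟨d₁, hd₁, he₁⟩ := List.mem_map.1 h12
      obtain ⟨d₂, hd₂, he₂⟩ := List.mem_map.1 h34
      have hpr := hsame d₁ hd₁ d₂ hd₂ (he₁.trans he₂.symm)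
      have hfst : d₁.fst = d₂.fst := congrArg Prod.fst hpr
      have k1 := key_side' hG hd₁ v
      have k2 := key_side' hG hd₂ v
      rw [he₁] at k1
      rw [he₂, ← hfst] at k2
      have hwe : Real.sqrt (w e) * Real.sqrt (w e) = w e :=
        Real.mul_self_sqrt (hw e e.2).le
      by_cases hR : (G.deleteEdges {(e : Sym2 V)}).Reachable v d₁.fst
      · rw [if_pos (k1.2.mpr hR), if_neg (fun h => (k1.1.mp h) hR),
          if_pos (k2.2.mpr hR), if_neg (fun h => (k2.1.mp h) hR), if_pos ⟨h12, h34⟩]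
        simpa using hwe
      · rw [if_neg (fun h => hR (k1.2.mp h)), if_pos (k1.1.mpr hR),
          if_neg (fun h => hR (k2.2.mp h)), if_pos (k2.1.mpr hR), if_pos ⟨h12, h34⟩]
        simpa using hwe
    · have hr : (G.deleteEdges {(e : Sym2 V)}).Reachable v₃ v₄ :=
        not_not.1 (fun hn => h34 ((mem_treePath_iff' hG v₃ v₄ _).2 hn))
      have hiff : ((e : Sym2 V) ∈ (treePath G hG v v₃).edges) ↔
          ((e : Sym2 V) ∈ (treePath G hG v v₄).edges) := by
        rw [mem_treePath_iff' hG, mem_treePath_iff' hG]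
        exact not_congr ⟨fun h => h.trans hr, fun h => h.trans hr.symm⟩
      rw [if_congr hiff rfl rfl, sub_self, zero_mul, if_neg (fun h => h34 h.2)]
  · have hr : (G.deleteEdges {(e : Sym2 V)}).Reachable v₁ v₂ :=
      not_not.1 (fun hn => h12 ((mem_treePath_iff' hG v₁ v₂ _).2 hn))
    have hiff : ((e : Sym2 V) ∈ (treePath G hG v v₁).edges) ↔
        ((e : Sym2 V) ∈ (treePath G hG v v₂).edges) := by
      rw [mem_treePath_iff' hG, mem_treePath_iff' hG]
      exact not_congr ⟨fun h => h.trans hr, fun h => h.trans hr.symm⟩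
    rw [if_congr hiff rfl rfl, sub_self, mul_zero, if_neg (fun h => h12 h.1)]
end

section
/- Let T be a positively edge-weighted tree with square root embedding Ψ. For any three distinct nodes v_1, v_2, w of T, the vectors Ψ(v_1) - Ψ(w) and Ψ(v_2) - Ψ(w) satisfy (Ψ(v_1) - Ψ(w)) · (Ψ(v_2) - Ψ(w)) ≥ 0; that is, the angle at any point of the image configuration is never obtuse. -/
open SimpleGraph

open RealInnerProductSpace in
/-- no angle of the embedded configuration is obtuse: for distinct nodes
`v₁, v₂, u`, the vectors `Ψ v₁ - Ψ u` and `Ψ v₂ - Ψ u` have nonnegative dot product. -/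
theorem sqrtEmbed_angle_not_obtuse {V : Type*} [DecidableEq V] (G : SimpleGraph V)
    (hG : G.IsTree) [Fintype G.edgeSet] (w : Sym2 V → ℝ) (hw : ∀ e ∈ G.edgeSet, 0 < w e)
    (v v₁ v₂ u : V) (h₁ : v₁ ≠ u) (h₂ : v₂ ≠ u) (h₁₂ : v₁ ≠ v₂) :
    0 ≤ ⟪sqrtEmbed G hG w v v₁ - sqrtEmbed G hG w v u,
          sqrtEmbed G hG w v v₂ - sqrtEmbed G hG w v u⟫ := by
  rw [PiLp.inner_apply]
  apply Finset.sum_nonneg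
  intro e _
  simp only [sqrtEmbed, WithLp.ofLp_toLp, PiLp.sub_apply, RCLike.inner_apply, conj_trivial]
  have hs : 0 ≤ Real.sqrt (w e) := Real.sqrt_nonneg _
  split_ifs <;> simp <;> nlinarith
end

section
/- Let T be a positively edge-weighted tree with square root embedding Ψ, and let L_1, L_2 be disjoint subsets of the vertices of T. If for every v_1, v_2 ∈ L_1 and w_1, w_2 ∈ L_2, the paths P_{v_1,v_2} and P_{w_1,w_2} share no edge, then for all v_1, v_2 ∈ L_1 and w_1, w_2 ∈ L_2 one has (Ψ(v_1) - Ψ(v_2)) · (Ψ(w_1) - Ψ(w_2)) = 0, i.e., the affine spans of Ψ(L_1) and Ψ(L_2) are orthogonal. -/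
open SimpleGraph

lemma treePath_triangle {V : Type*} [DecidableEq V] (G : SimpleGraph V) (hG : G.IsTree) (a b c : V)
    (e : Sym2 V) (he : e ∈ (treePath G hG a c).edges) :
    e ∈ (treePath G hG a b).edges ∨ e ∈ (treePath G hG b c).edges := by
  have spec := (hG.existsUnique_path a c).choose_spec
  set q := ((treePath G hG a b).append (treePath G hG b c)).bypass with hq
  have hqp : q.IsPath := SimpleGraph.Walk.bypass_isPath _
  have : q = treePath G hG a c := spec.2 q hqp
  rw [← this] at he
  have := SimpleGraph.Walk.edges_bypass_subset _ he
  rw [SimpleGraph.Walk.edges_append, List.mem_append] at this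
  exact this

open RealInnerProductSpace in
/-- if all paths within `L₁` are edge-disjoint from all paths within `L₂`,
then every difference vector of embedded points of `L₁` is orthogonal to every difference
vector of embedded points of `L₂` (the affine spans are orthogonal). -/
theorem sqrtEmbed_spans_orthogonal {V : Type*} [DecidableEq V] (G : SimpleGraph V)
    (hG : G.IsTree) [Fintype G.edgeSet] (w : Sym2 V → ℝ) (hw : ∀ e ∈ G.edgeSet, 0 < w e)
    (v : V) (L₁ L₂ : Set V) (hdisj : Disjoint L₁ L₂)
    (h : ∀ v₁ ∈ L₁, ∀ v₂ ∈ L₁, ∀ w₁ ∈ L₂, ∀ w₂ ∈ L₂, ∀ e : Sym2 V,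
      e ∈ (treePath G hG v₁ v₂).edges → e ∉ (treePath G hG w₁ w₂).edges) :
    ∀ v₁ ∈ L₁, ∀ v₂ ∈ L₁, ∀ w₁ ∈ L₂, ∀ w₂ ∈ L₂,
      ⟪sqrtEmbed G hG w v v₁ - sqrtEmbed G hG w v v₂,
        sqrtEmbed G hG w v w₁ - sqrtEmbed G hG w v w₂⟫ = 0 := by
  intro v₁ hv₁ v₂ hv₂ w₁ hw₁ w₂ hw₂
  have key : ∀ e : G.edgeSet,
      (sqrtEmbed G hG w v v₁ e - sqrtEmbed G hG w v v₂ e) *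
      (sqrtEmbed G hG w v w₁ e - sqrtEmbed G hG w v w₂ e) = 0 := by
    intro e
    have diff : ∀ a b : V, (e : Sym2 V) ∈ (treePath G hG v a).edges →
        (e : Sym2 V) ∉ (treePath G hG v b).edges →
        (e : Sym2 V) ∈ (treePath G hG b a).edges := fun a b ha hb =>
      (treePath_triangle G hG v b a e ha).resolve_left hb
    unfold sqrtEmbed
    by_cases h1 : (e : Sym2 V) ∈ (treePath G hG v v₁).edges <;>
    by_cases h2 : (e : Sym2 V) ∈ (treePath G hG v v₂).edges <;>
    by_cases h3 : (e : Sym2 V) ∈ (treePath G hG v w₁).edges <;>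
    by_cases h4 : (e : Sym2 V) ∈ (treePath G hG v w₂).edges <;>
    simp only [WithLp.ofLp_toLp, h1, h2, h3, h4, if_true, if_false, sub_self, zero_mul, mul_zero,
      zero_sub, sub_zero]
    · exact absurd (diff w₁ w₂ h3 h4) (h v₂ hv₂ v₁ hv₁ w₂ hw₂ w₁ hw₁ e (diff v₁ v₂ h1 h2))
    · exact absurd (diff w₂ w₁ h4 h3) (h v₂ hv₂ v₁ hv₁ w₁ hw₁ w₂ hw₂ e (diff v₁ v₂ h1 h2))
    · exact absurd (diff w₁ w₂ h3 h4) (h v₁ hv₁ v₂ hv₂ w₂ hw₂ w₁ hw₁ e (diff v₂ v₁ h2 h1))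
    · exact absurd (diff w₂ w₁ h4 h3) (h v₁ hv₁ v₂ hv₂ w₁ hw₁ w₂ hw₂ e (diff v₂ v₁ h2 h1))
  rw [PiLp.inner_apply]
  refine Finset.sum_eq_zero fun e _ => ?_
  have := key e
  rw [mul_comm] at this
  simpa using this
end
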